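/- Let H be a complex Hilbert space, ψ ∈ H a unit vector, and let Z_A, Z_B, Z_C be binary observables on H that pairwise commute. Write P_A^0 = P⁰(Z_A). If ⟨ψ, P_A^0 ψ⟩ = 2/3 and ⟨ψ, P_A^0 Z_B Z_C ψ⟩ = −2/3, then P_A^0 Z_B ψ = −P_A^0 Z_C ψ. -/

import Mathlib

open scoped ComplexInnerProductSpace

/-- A binary observable: a self-adjoint continuous linear map squaring to the identity. -/
structure IsBinaryObservable {H : Type*} [NormedAddCommGroup H] [InnerProductSpace ℂ H]
    [CompleteSpace H] (A : H →L[ℂ] H) : Prop where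
  selfAdjoint : IsSelfAdjoint A
  mul_self_eq_one : A ∘L A = 1

/-- Projection onto the `+1` eigenspace of a binary observable. -/
noncomputable def projP0 {H : Type*} [NormedAddCommGroup H] [InnerProductSpace ℂ H]
    (Z : H →L[ℂ] H) : H →L[ℂ] H := (2 : ℂ)⁻¹ • (1 + Z)

/-- Projection onto the `−1` eigenspace of a binary observable. -/
noncomputable def projP1 {H : Type*} [NormedAddCommGroup H] [InnerProductSpace ℂ H]
    (Z : H →L[ℂ] H) : H →L[ℂ] H := (2 : ℂ)⁻¹ • (1 - Z)

theorem stmt2 {H : Type*} [NormedAddCommGroup H] [InnerProductSpace ℂ H] [CompleteSpace H]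
    (ψ : H) (hψ : ‖ψ‖ = 1)
    (ZA ZB ZC : H →L[ℂ] H)
    (hZA : IsBinaryObservable ZA) (hZB : IsBinaryObservable ZB)
    (hZC : IsBinaryObservable ZC)
    (hAB : Commute ZA ZB) (hAC : Commute ZA ZC) (hBC : Commute ZB ZC)
    (h1 : ⟪ψ, projP0 ZA ψ⟫ = 2/3)
    (h2 : ⟪ψ, projP0 ZA (ZB (ZC ψ))⟫ = -(2/3)) :
    projP0 ZA (ZB ψ) = -projP0 ZA (ZC ψ) := by
  set P := projP0 ZA with hPdef
  have hP : IsSelfAdjoint P := by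
    rw [hPdef, projP0]
    have : IsSelfAdjoint ((1 : H →L[ℂ] H) + ZA) := (IsSelfAdjoint.one (H →L[ℂ] H)).add hZA.selfAdjoint
    simpa [IsSelfAdjoint, star_smul, Complex.star_def, map_inv₀, map_ofNat] using
      congrArg (fun X => (2 : ℂ)⁻¹ • X) this.star_eq
  have hPP : P ∘L P = P := by
    rw [hPdef, projP0]
    ext x
    have h2a : ZA (ZA x) = x := congrFun (congrArg DFunLike.coe hZA.mul_self_eq_one) x
    simp [ContinuousLinearMap.smul_apply, ContinuousLinearMap.add_apply, h2a, smul_add,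
      smul_smul]
    module
  have hPcomm : ∀ (W : H →L[ℂ] H), Commute ZA W → ∀ x, P (W x) = W (P x) := by
    intro W hW x
    rw [hPdef, projP0]
    simp [ContinuousLinearMap.smul_apply, ContinuousLinearMap.add_apply, map_smul, map_add]
    have := congrFun (congrArg DFunLike.coe hW) x
    simpa [ContinuousLinearMap.mul_apply] using this
  have hPadj : ∀ x y : H, ⟪P x, y⟫ = ⟪x, P y⟫ := by
    intro x y
    conv_lhs => rw [← (ContinuousLinearMap.isSelfAdjoint_iff'.mp hP)]
    exact ContinuousLinearMap.adjoint_inner_left P y x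
  have hadj : ∀ (W : H →L[ℂ] H), IsSelfAdjoint W → ∀ x y : H, ⟪W x, y⟫ = ⟪x, W y⟫ := by
    intro W hW x y
    conv_lhs => rw [← (ContinuousLinearMap.isSelfAdjoint_iff'.mp hW)]
    exact ContinuousLinearMap.adjoint_inner_left W y x
  -- key computation
  have key : ∀ (W W' : H →L[ℂ] H), IsSelfAdjoint W → Commute ZA W →
      ⟪P (W ψ), P (W' ψ)⟫ = ⟪ψ, P (W (W' ψ))⟫ := by
    intro W W' hWsa hWc
    rw [hPadj]
    have : P (P (W' ψ)) = P (W' ψ) := by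
      have := congrFun (congrArg DFunLike.coe hPP) (W' ψ); simpa using this
    rw [this, hadj W hWsa, ← hPcomm W hWc]
  have hBB : ZB (ZB ψ) = ψ := congrFun (congrArg DFunLike.coe hZB.mul_self_eq_one) ψ
  have hCC : ZC (ZC ψ) = ψ := congrFun (congrArg DFunLike.coe hZC.mul_self_eq_one) ψ
  have hCB : ZC (ZB ψ) = ZB (ZC ψ) := congrFun (congrArg DFunLike.coe hBC.symm) ψ
  have e1 : ⟪P (ZB ψ), P (ZB ψ)⟫ = 2/3 := by
    rw [key ZB ZB hZB.selfAdjoint hAB, hBB, h1]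
  have e2 : ⟪P (ZB ψ), P (ZC ψ)⟫ = -(2/3) := by
    rw [key ZB ZC hZB.selfAdjoint hAB, h2]
  have e3 : ⟪P (ZC ψ), P (ZB ψ)⟫ = -(2/3) := by
    rw [key ZC ZB hZC.selfAdjoint hAC, hCB, h2]
  have e4 : ⟪P (ZC ψ), P (ZC ψ)⟫ = 2/3 := by
    rw [key ZC ZC hZC.selfAdjoint hAC, hCC, h1]
  have hsum : ⟪P (ZB ψ) + P (ZC ψ), P (ZB ψ) + P (ZC ψ)⟫ = 0 := by
    rw [inner_add_left, inner_add_right, inner_add_right, e1, e2, e3, e4]; ring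
  exact eq_neg_of_add_eq_zero_left (inner_self_eq_zero.mp hsum)
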